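/- The cofibration-fibration factorization of a combinatorial 2-cobordism is unique: any two factorizations of the same cobordism as a cofibration followed by a fibration are related by bijections ψ: A ≅ A', φ: B ≅ B', χ: k ≅ k' compatible with all structure maps and genus functions. -/

import Mathlib

open scoped Classical

/-- The relation generating the pushout of a span `A ← k → B` of (finite) sets. -/
def PRel {k A B : Type} (f : k → A) (g : k → B) : A ⊕ B → A ⊕ B → Prop :=
  fun x y => ∃ z, x = Sum.inl (f z) ∧ y = Sum.inr (g z)

/-- The pushout of the span `A ← k → B`. -/
def Pushout {k A B : Type} (f : k → A) (g : k → B) : Type :=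
  Quot (PRel f g)

/-- Canonical map `ι_A : A → A ⊔_k B`. -/
def pInl {k A B : Type} (f : k → A) (g : k → B) (a : A) : Pushout f g :=
  Quot.mk _ (Sum.inl a)

/-- Canonical map `ι_B : B → A ⊔_k B`. -/
def pInr {k A B : Type} (f : k → A) (g : k → B) (b : B) : Pushout f g :=
  Quot.mk _ (Sum.inr b)

instance {k A B : Type} (f : k → A) (g : k → B) [Finite A] [Finite B] :
    Finite (Pushout f g) :=
  Quot.finite _

noncomputable instance {k A B : Type} (f : k → A) (g : k → B) [Fintype A] [Fintype B] :
    Fintype (Pushout f g) :=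
  Fintype.ofFinite _

/-- The genus formula of Definition 3.4:
`g(x) = 1 + Σ_{ι_A(a)=x}(g₁(a)−1) + Σ_{ι_B(b)=x}(g₂(b)−1) + #{y ∈ k : y ↦ x}`. -/
noncomputable def compGenus {k A B : Type} [Fintype k] [Fintype A] [Fintype B]
    (f : k → A) (g : k → B) (g1 : A → ℤ) (g2 : B → ℤ) (x : Pushout f g) : ℤ :=
  1 + (∑ a ∈ Finset.univ.filter (fun a => pInl f g a = x), (g1 a - 1))
    + (∑ b ∈ Finset.univ.filter (fun b => pInr f g b = x), (g2 b - 1))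
    + ((Finset.univ.filter (fun y : k => pInl f g (f y) = x)).card : ℤ)

/-- A combinatorial 2-cobordism from the finite set `m` to the finite set `n`. -/
structure Cob (m n : Type) : Type 1 where
  C : Type
  [fin : Fintype C]
  lm : m → C
  ln : n → C
  g : C → ℕ

attribute [instance] Cob.fin

/-- Composition of combinatorial 2-cobordisms via pushout of component sets
and the genus formula of Definition 3.4. -/
noncomputable def Cob.comp {m k n : Type} [Fintype k] (ψ : Cob k n) (φ : Cob m k) :
    Cob m n where
  C := Pushout φ.ln ψ.lm
  lm := fun x => pInl φ.ln ψ.lm (φ.lm x)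
  ln := fun y => pInr φ.ln ψ.lm (ψ.ln y)
  g := fun x =>
    (compGenus φ.ln ψ.lm (fun a => (φ.g a : ℤ)) (fun b => (ψ.g b : ℤ)) x).toNat

/-- Equivalence of combinatorial 2-cobordisms: a bijection of component sets
intertwining the structure maps and the genus functions. -/
def Cob.Equiv {m n : Type} (φ φ' : Cob m n) : Prop :=
  ∃ χ : φ.C ≃ φ'.C,
    (∀ x, χ (φ.lm x) = φ'.lm x) ∧ (∀ y, χ (φ.ln y) = φ'.ln y) ∧
    (∀ c, φ'.g (χ c) = φ.g c)

/-- A cofibration: `l_n` is injective and `l_n` lifts through `l_m`. -/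
def Cob.IsCofib {m n : Type} (φ : Cob m n) : Prop :=
  Function.Injective φ.ln ∧ ∃ u : n → m, ∀ y, φ.lm (u y) = φ.ln y

/-- A fibration: `l_m` is injective, `l_n` is surjective, and `g ∘ l_m = 0`. -/
def Cob.IsFib {m n : Type} (φ : Cob m n) : Prop :=
  Function.Injective φ.lm ∧ Function.Surjective φ.ln ∧ ∀ x, φ.g (φ.lm x) = 0

/-- The five local conditions of Definition 5.2.1 defining an oriented 1-cobordism
between signed finite sets (signs recorded by Boolean functions, `true` = `+`). -/
def IsOriented {m n C : Type} (sm : m → Bool) (sn : n → Bool)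
    (lm : m → C) (ln : n → C) : Prop :=
  ∀ c : C,
    (∃ a b : m, sm a = true ∧ sm b = false ∧ a ≠ b ∧
      (∀ x, lm x = c ↔ (x = a ∨ x = b)) ∧ (∀ y, ln y ≠ c)) ∨
    (∃ a b : n, sn a = true ∧ sn b = false ∧ a ≠ b ∧
      (∀ y, ln y = c ↔ (y = a ∨ y = b)) ∧ (∀ x, lm x ≠ c)) ∨
    (∃ a : m, ∃ b : n, sm a = sn b ∧
      (∀ x, lm x = c ↔ x = a) ∧ (∀ y, ln y = c ↔ y = b)) ∨
    ((∀ x, lm x ≠ c) ∧ (∀ y, ln y ≠ c))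

section Helpers

variable {k A B : Type} {α : k → A} {β : k → B}

/-- Explicit description of the equivalence relation generated by `PRel`. -/
def SRel (α : k → A) (β : k → B) : A ⊕ B → A ⊕ B → Prop
  | .inl a, .inl a' => a = a'
  | .inl a, .inr b => ∃ z, α z = a ∧ β z = b
  | .inr b, .inl a => ∃ z, α z = a ∧ β z = b
  | .inr b, .inr b' => b = b'

theorem srel_of_eqvGen (hα : Function.Injective α) (hβ : Function.Injective β)
    {x y : A ⊕ B} (h : Relation.EqvGen (PRel α β) x y) : SRel α β x y := by
  induction h with
  | rel x y h => obtain ⟨z, rfl, rfl⟩ := h; exact ⟨z, rfl, rfl⟩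
  | refl x => cases x <;> simp [SRel]
  | symm x y _ ih =>
    rcases x with a | b <;> rcases y with a1 | b1
    · exact ih.symm
    · exact ih
    · exact ih
    · exact ih.symm
  | trans x y z _ _ ih1 ih2 =>
    rcases x with a | b <;> rcases y with a1 | b1 <;> rcases z with a2 | b2
    · exact ih1.trans ih2
    · exact ih1 ▸ ih2
    · obtain ⟨w, hw1, hw2⟩ := ih1
      obtain ⟨w', hw1', hw2'⟩ := ih2
      have : w = w' := hβ (hw2.trans hw2'.symm)
      subst this
      exact hw1.symm.trans hw1'
    · obtain ⟨w, hw1, hw2⟩ := ih1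
      exact ⟨w, hw1, hw2.trans ih2⟩
    · obtain ⟨w, hw1, hw2⟩ := ih1
      exact ⟨w, hw1.trans ih2, hw2⟩
    · obtain ⟨w, hw1, hw2⟩ := ih1
      obtain ⟨w', hw1', hw2'⟩ := ih2
      have : w = w' := hα (hw1.trans hw1'.symm)
      subst this
      exact hw2.symm.trans hw2'
    · exact ih1 ▸ ih2
    · exact ih1.trans ih2

theorem srel_iff (hα : Function.Injective α) (hβ : Function.Injective β)
    {x y : A ⊕ B} :
    Quot.mk (PRel α β) x = Quot.mk (PRel α β) y ↔ SRel α β x y := by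
  constructor
  · intro h
    exact srel_of_eqvGen hα hβ (Quot.eq.mp h)
  · intro h
    rcases x with a | b <;> rcases y with a1 | b1
    · exact congrArg _ (congrArg _ h)
    · obtain ⟨z, rfl, rfl⟩ := h; exact Quot.sound ⟨z, rfl, rfl⟩
    · obtain ⟨z, rfl, rfl⟩ := h; exact (Quot.sound ⟨z, rfl, rfl⟩).symm
    · exact congrArg _ (congrArg _ h)

theorem pInl_inj_iff (hα : Function.Injective α) (hβ : Function.Injective β)
    {a a' : A} : pInl α β a = pInl α β a' ↔ a = a' :=
  srel_iff hα hβ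

theorem pInr_inj_iff (hα : Function.Injective α) (hβ : Function.Injective β)
    {b b' : B} : pInr α β b = pInr α β b' ↔ b = b' :=
  srel_iff hα hβ

theorem pInl_eq_pInr_iff (hα : Function.Injective α) (hβ : Function.Injective β)
    {a : A} {b : B} : pInl α β a = pInr α β b ↔ ∃ z, α z = a ∧ β z = b :=
  srel_iff hα hβ

theorem pInr_beta (z : k) : pInr α β (β z) = pInl α β (α z) :=
  (Quot.sound ⟨z, rfl, rfl⟩).symm

theorem pushout_cases (x : Pushout α β) :
    (∃ a, pInl α β a = x) ∨ (∃ b, pInr α β b = x) := by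
  induction x using Quot.ind with
  | _ x =>
    rcases x with a | b
    · exact Or.inl ⟨a, rfl⟩
    · exact Or.inr ⟨b, rfl⟩

end Helpers

section Genus

variable {k A B : Type} [Fintype k] [Fintype A] [Fintype B]
  {α : k → A} {β : k → B} {g1 : A → ℤ} {g2 : B → ℤ}

theorem compGenus_pInl_not_mem (hα : Function.Injective α) (hβ : Function.Injective β)
    {a : A} (ha : a ∉ Set.range α) :
    compGenus α β g1 g2 (pInl α β a) = g1 a := by
  have h1 : Finset.univ.filter (fun a' => pInl α β a' = pInl α β a) = {a} := by
    ext a'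
    simp [pInl_inj_iff hα hβ]
  have h2 : Finset.univ.filter (fun b => pInr α β b = pInl α β a) = ∅ := by
    ext b
    simp only [Finset.mem_filter, Finset.mem_univ, true_and, Finset.notMem_empty,
      iff_false]
    intro hb
    obtain ⟨z, hz1, _⟩ := (pInl_eq_pInr_iff hα hβ).mp hb.symm
    exact ha ⟨z, hz1⟩
  have h3 : Finset.univ.filter (fun y : k => pInl α β (α y) = pInl α β a) = ∅ := by
    ext y
    simp only [Finset.mem_filter, Finset.mem_univ, true_and, Finset.notMem_empty,
      iff_false, pInl_inj_iff hα hβ]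
    exact fun hy => ha ⟨y, hy⟩
  unfold compGenus
  rw [h1, h2, h3]
  simp

theorem compGenus_pInl_mem (hα : Function.Injective α) (hβ : Function.Injective β)
    (z : k) :
    compGenus α β g1 g2 (pInl α β (α z)) = g1 (α z) + g2 (β z) := by
  have h1 : Finset.univ.filter (fun a' => pInl α β a' = pInl α β (α z)) = {α z} := by
    ext a'
    simp [pInl_inj_iff hα hβ]
  have h2 : Finset.univ.filter (fun b => pInr α β b = pInl α β (α z)) = {β z} := by
    ext b
    simp only [Finset.mem_filter, Finset.mem_univ, true_and, Finset.mem_singleton]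
    constructor
    · intro hb
      obtain ⟨w, hw1, hw2⟩ := (pInl_eq_pInr_iff hα hβ).mp hb.symm
      have : w = z := hα hw1
      subst this
      exact hw2.symm
    · rintro rfl
      exact pInr_beta z
  have h3 : Finset.univ.filter (fun y : k => pInl α β (α y) = pInl α β (α z)) = {z} := by
    ext y
    simp only [Finset.mem_filter, Finset.mem_univ, true_and, Finset.mem_singleton,
      pInl_inj_iff hα hβ]
    exact ⟨fun hy => hα hy, fun hy => hy ▸ rfl⟩
  unfold compGenus
  rw [h1, h2, h3]
  simp
  ring

theorem compGenus_pInr_not_mem (hα : Function.Injective α) (hβ : Function.Injective β)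
    {b : B} (hb : b ∉ Set.range β) :
    compGenus α β g1 g2 (pInr α β b) = g2 b := by
  have h1 : Finset.univ.filter (fun a => pInl α β a = pInr α β b) = ∅ := by
    ext a
    simp only [Finset.mem_filter, Finset.mem_univ, true_and, Finset.notMem_empty,
      iff_false]
    intro ha
    obtain ⟨z, _, hz2⟩ := (pInl_eq_pInr_iff hα hβ).mp ha
    exact hb ⟨z, hz2⟩
  have h2 : Finset.univ.filter (fun b' => pInr α β b' = pInr α β b) = {b} := by
    ext b'
    simp [pInr_inj_iff hα hβ]
  have h3 : Finset.univ.filter (fun y : k => pInl α β (α y) = pInr α β b) = ∅ := by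
    ext y
    simp only [Finset.mem_filter, Finset.mem_univ, true_and, Finset.notMem_empty,
      iff_false]
    intro hy
    obtain ⟨z, _, hz2⟩ := (pInl_eq_pInr_iff hα hβ).mp hy
    exact hb ⟨z, hz2⟩
  unfold compGenus
  rw [h1, h2, h3]
  simp

end Genus

section CompG

variable {m k n : Type} [Fintype k] (e : Cob m k) (f : Cob k n)

theorem comp_g_pInl (hα : Function.Injective e.ln) (hβ : Function.Injective f.lm)
    (hf0 : ∀ z, f.g (f.lm z) = 0) (a : e.C) :
    (Cob.comp f e).g (pInl e.ln f.lm a) = e.g a := by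
  show (compGenus e.ln f.lm (fun a => (e.g a : ℤ)) (fun b => (f.g b : ℤ))
    (pInl e.ln f.lm a)).toNat = e.g a
  by_cases ha : a ∈ Set.range e.ln
  · obtain ⟨z, rfl⟩ := ha
    rw [compGenus_pInl_mem hα hβ z]
    simp [hf0 z]
  · rw [compGenus_pInl_not_mem hα hβ ha]
    simp

theorem comp_g_pInr (hα : Function.Injective e.ln) (hβ : Function.Injective f.lm)
    {b : f.C} (hb : b ∉ Set.range f.lm) :
    (Cob.comp f e).g (pInr e.ln f.lm b) = f.g b := by
  show (compGenus e.ln f.lm (fun a => (e.g a : ℤ)) (fun b => (f.g b : ℤ))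
    (pInr e.ln f.lm b)).toNat = f.g b
  rw [compGenus_pInr_not_mem hα hβ hb]
  simp

end CompG

/-- Main construction: an injective structure-preserving map of composites
induces maps on components. -/
theorem exists_triple {m n k k' : Type} (fk : Fintype k) (fk' : Fintype k')
    (e : Cob m k) (f : Cob k n) (e' : Cob m k') (f' : Cob k' n)
    (he : e.IsCofib) (hf : f.IsFib) (he' : e'.IsCofib) (hf' : f'.IsFib)
    (t : Pushout e.ln f.lm → Pushout e'.ln f'.lm)
    (ht : Function.Injective t)
    (hT1 : ∀ x, t (pInl e.ln f.lm (e.lm x)) = pInl e'.ln f'.lm (e'.lm x))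
    (hT2 : ∀ y, t (pInr e.ln f.lm (f.ln y)) = pInr e'.ln f'.lm (f'.ln y)) :
    ∃ (χf : k → k') (ψf : e.C → e'.C) (φf : f.C → f'.C),
      (∀ a, pInl e'.ln f'.lm (ψf a) = t (pInl e.ln f.lm a)) ∧
      (∀ b, pInr e'.ln f'.lm (φf b) = t (pInr e.ln f.lm b)) ∧
      (∀ z, pInl e'.ln f'.lm (e'.ln (χf z)) = t (pInl e.ln f.lm (e.ln z))) := by
  obtain ⟨hαinj, u, hu⟩ := he
  obtain ⟨hβinj, hsurj, hf0⟩ := hf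
  obtain ⟨hαinj', u', hu'⟩ := he'
  obtain ⟨hβinj', hsurj', hf0'⟩ := hf'
  have hψ : ∀ a : e.C, ∃ a', pInl e'.ln f'.lm a' = t (pInl e.ln f.lm a) := by
    intro a
    by_cases ha : a ∈ Set.range e.ln
    · obtain ⟨z, rfl⟩ := ha
      refine ⟨e'.lm (u z), ?_⟩
      rw [← hu z, hT1]
    · rcases pushout_cases (t (pInl e.ln f.lm a)) with ⟨a', h'⟩ | ⟨b', h'⟩
      · exact ⟨a', h'⟩
      · exfalso
        obtain ⟨y, rfl⟩ := hsurj' b'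
        rw [← hT2 y] at h'
        have := ht h'
        obtain ⟨z, hz1, _⟩ := (pInl_eq_pInr_iff hαinj hβinj).mp this.symm
        exact ha ⟨z, hz1⟩
  have hφ : ∀ b : f.C, ∃ b', pInr e'.ln f'.lm b' = t (pInr e.ln f.lm b) := by
    intro b
    obtain ⟨y, rfl⟩ := hsurj b
    exact ⟨f'.ln y, (hT2 y).symm⟩
  have hχ : ∀ z : k, ∃ z', pInl e'.ln f'.lm (e'.ln z') = t (pInl e.ln f.lm (e.ln z)) := by
    intro z
    have h1 : t (pInl e.ln f.lm (e.ln z)) = pInl e'.ln f'.lm (e'.lm (u z)) := by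
      rw [← hu z, hT1]
    obtain ⟨y, hy⟩ := hsurj (f.lm z)
    have h2 : t (pInl e.ln f.lm (e.ln z)) = pInr e'.ln f'.lm (f'.ln y) := by
      rw [← pInr_beta z, ← hy, hT2]
    obtain ⟨w, hw1, _⟩ := (pInl_eq_pInr_iff hαinj' hβinj').mp (h1.symm.trans h2)
    exact ⟨w, by rw [hw1, ← h1]⟩
  choose ψf hψf using hψ
  choose φf hφf using hφ
  choose χf hχf using hχ
  exact ⟨χf, ψf, φf, hψf, hφf, hχf⟩

/-- Proposition 4.3, uniqueness: any two cofibration-fibration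
factorizations of the same cobordism are related by bijections `χ : k ≃ k'`,
`ψ : A ≃ A'`, `φ : B ≃ B'` compatible with all structure maps and genus functions. -/
theorem stmt_9 {m n k k' : Type} (fk : Fintype k) (fk' : Fintype k')
    (e : Cob m k) (f : Cob k n) (e' : Cob m k') (f' : Cob k' n)
    (he : e.IsCofib) (hf : f.IsFib) (he' : e'.IsCofib) (hf' : f'.IsFib)
    (h : Cob.Equiv (@Cob.comp m k n fk f e) (@Cob.comp m k' n fk' f' e')) :
    ∃ (χ : k ≃ k') (ψ : e.C ≃ e'.C) (φb : f.C ≃ f'.C),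
      (∀ x, ψ (e.lm x) = e'.lm x) ∧ (∀ y, φb (f.ln y) = f'.ln y) ∧
      (∀ z, ψ (e.ln z) = e'.ln (χ z)) ∧ (∀ z, φb (f.lm z) = f'.lm (χ z)) ∧
      (∀ a, e'.g (ψ a) = e.g a) ∧ (∀ b, f'.g (φb b) = f.g b) := by
  classical
  obtain ⟨χ₀, hlm, hln, hg⟩ := h
  -- unpack structure hypotheses
  obtain ⟨hαinj, u, hu⟩ := id he
  obtain ⟨hβinj, hsurj, hf0⟩ := id hf
  obtain ⟨hαinj', u', hu'⟩ := id he'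
  obtain ⟨hβinj', hsurj', hf0'⟩ := id hf'
  -- reinterpret χ₀ as a map of pushouts
  have hT1 : ∀ x, χ₀ (pInl e.ln f.lm (e.lm x)) = pInl e'.ln f'.lm (e'.lm x) := hlm
  have hT2 : ∀ y, χ₀ (pInr e.ln f.lm (f.ln y)) = pInr e'.ln f'.lm (f'.ln y) := hln
  have hT1' : ∀ x, χ₀.symm (pInl e'.ln f'.lm (e'.lm x)) = pInl e.ln f.lm (e.lm x) := by
    intro x; rw [← hT1 x]; exact Equiv.symm_apply_apply _ _
  have hT2' : ∀ y, χ₀.symm (pInr e'.ln f'.lm (f'.ln y)) = pInr e.ln f.lm (f.ln y) := by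
    intro y; rw [← hT2 y]; exact Equiv.symm_apply_apply _ _
  obtain ⟨χf, ψf, φf, hψf, hφf, hχf⟩ :=
    exists_triple fk fk' e f e' f' he hf he' hf' χ₀ χ₀.injective hT1 hT2
  obtain ⟨χg, ψg, φg, hψg, hφg, hχg⟩ :=
    exists_triple fk' fk e' f' e f he' hf' he hf χ₀.symm χ₀.symm.injective hT1' hT2'
  -- injectivity helpers
  have hil : Function.Injective (pInl e.ln f.lm) :=
    fun a a' hh => (pInl_inj_iff hαinj hβinj).mp hh
  have hir : Function.Injective (pInr e.ln f.lm) :=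
    fun b b' hh => (pInr_inj_iff hαinj hβinj).mp hh
  have hil' : Function.Injective (pInl e'.ln f'.lm) :=
    fun a a' hh => (pInl_inj_iff hαinj' hβinj').mp hh
  have hir' : Function.Injective (pInr e'.ln f'.lm) :=
    fun b b' hh => (pInr_inj_iff hαinj' hβinj').mp hh
  -- the three equivalences
  have hψgf : ∀ a, ψg (ψf a) = a := by
    intro a
    apply hil
    rw [hψg, hψf]; exact Equiv.symm_apply_apply _ _
  have hψfg : ∀ a, ψf (ψg a) = a := by
    intro a
    apply hil'
    rw [hψf, hψg]; exact Equiv.apply_symm_apply _ _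
  have hφgf : ∀ b, φg (φf b) = b := by
    intro b
    apply hir
    rw [hφg, hφf]; exact Equiv.symm_apply_apply _ _
  have hφfg : ∀ b, φf (φg b) = b := by
    intro b
    apply hir'
    rw [hφf, hφg]; exact Equiv.apply_symm_apply _ _
  have hχgf : ∀ z, χg (χf z) = z := by
    intro z
    apply hαinj
    apply hil
    rw [hχg, hχf]; exact Equiv.symm_apply_apply _ _
  have hχfg : ∀ z, χf (χg z) = z := by
    intro z
    apply hαinj'
    apply hil'
    rw [hχf, hχg]; exact Equiv.apply_symm_apply _ _
  refine ⟨⟨χf, χg, hχgf, hχfg⟩, ⟨ψf, ψg, hψgf, hψfg⟩, ⟨φf, φg, hφgf, hφfg⟩,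
    ?_, ?_, ?_, ?_, ?_, ?_⟩
  · intro x
    apply hil'
    simp only [Equiv.coe_fn_mk]
    rw [hψf, hT1]
  · intro y
    apply hir'
    simp only [Equiv.coe_fn_mk]
    rw [hφf, hT2]
  · intro z
    apply hil'
    simp only [Equiv.coe_fn_mk]
    rw [hψf, ← hχf]
  · intro z
    apply hir'
    simp only [Equiv.coe_fn_mk]
    rw [hφf, pInr_beta z, pInr_beta (χf z)]
    exact (hχf z).symm
  · intro a
    simp only [Equiv.coe_fn_mk]
    have h1 : e'.g (ψf a) = (Cob.comp f' e').g (pInl e'.ln f'.lm (ψf a)) :=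
      (comp_g_pInl e' f' hαinj' hβinj' hf0' (ψf a)).symm
    rw [h1, hψf a]
    have h2 := hg (pInl e.ln f.lm a)
    rw [h2]
    exact comp_g_pInl e f hαinj hβinj hf0 a
  · intro b
    simp only [Equiv.coe_fn_mk]
    by_cases hb : b ∈ Set.range f.lm
    · obtain ⟨z, rfl⟩ := hb
      have hφz : φf (f.lm z) = f'.lm (χf z) := by
        apply hir'
        rw [hφf, pInr_beta z, pInr_beta (χf z)]
        exact (hχf z).symm
      rw [hφz, hf0' (χf z), hf0 z]
    · have hb' : φf b ∉ Set.range f'.lm := by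
        rintro ⟨z', hz'⟩
        apply hb
        have : pInr e'.ln f'.lm (φf b) = pInl e'.ln f'.lm (e'.lm (u' z')) := by
          rw [← hz', pInr_beta z', ← hu' z']
        rw [hφf b, ← hT1 (u' z')] at this
        have h3 := χ₀.injective this
        obtain ⟨w, _, hw2⟩ := (pInl_eq_pInr_iff hαinj hβinj).mp h3.symm
        exact ⟨w, hw2⟩
      have h1 : f'.g (φf b) = (Cob.comp f' e').g (pInr e'.ln f'.lm (φf b)) :=
        (comp_g_pInr e' f' hαinj' hβinj' hb').symm
      rw [h1, hφf b]
      have h2 := hg (pInr e.ln f.lm b)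
      rw [h2]
      exact comp_g_pInr e f hαinj hβinj hb
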